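/- Let C = C_1;D and C_2 be comparator networks on n channels such that C_1 and C_2 have the same depth and the graph representations G(C_1) and G(C_2) are isomorphic. If C is a sorting network, then there is a comparator network D' on n channels with the same depth as D such that C_2;D' is a sorting network. -/

import Mathlib

namespace SN

open scoped Classical

/-- A comparator on `n` channels: a pair of channels. -/
abbrev Comp (n : ℕ) := Fin n × Fin n

/-- A layer is a finite set of comparators. -/
abbrev Layer (n : ℕ) := Finset (Comp n)

/-- A comparator network is a sequence (list) of layers; its depth is the length. -/
abbrev Net (n : ℕ) := List (Layer n)

/-- Each channel is used by at most one comparator of the layer. -/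
def NoOverlap {n : ℕ} (L : Layer n) : Prop :=
  ∀ c ∈ L, ∀ c' ∈ L, c ≠ c' →
    c.1 ≠ c'.1 ∧ c.1 ≠ c'.2 ∧ c.2 ≠ c'.1 ∧ c.2 ≠ c'.2

/-- A (standard) layer: comparators `(i,j)` with `i < j`, channels pairwise disjoint. -/
def IsLayer {n : ℕ} (L : Layer n) : Prop :=
  (∀ c ∈ L, c.1 < c.2) ∧ NoOverlap L

/-- A generalized layer: comparators `(i,j)` with `i ≠ j` allowed in any order. -/
def IsGenLayer {n : ℕ} (L : Layer n) : Prop :=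
  (∀ c ∈ L, c.1 ≠ c.2) ∧ NoOverlap L

def IsNet {n : ℕ} (C : Net n) : Prop := ∀ L ∈ C, IsLayer L

def IsGenNet {n : ℕ} (C : Net n) : Prop := ∀ L ∈ C, IsGenLayer L

/-- Apply one layer to a Boolean vector: a comparator `(i,j)` puts the min
(`&&`) on channel `i` and the max (`||`) on channel `j`. -/
noncomputable def applyLayer {n : ℕ} (L : Layer n) (x : Fin n → Bool) : Fin n → Bool :=
  fun k =>
    if h1 : ∃ c ∈ L, c.1 = k then x h1.choose.1 && x h1.choose.2
    else if h2 : ∃ c ∈ L, c.2 = k then x h2.choose.1 || x h2.choose.2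
    else x k

/-- Run a comparator network on a Boolean input (layers applied in sequence). -/
noncomputable def run {n : ℕ} (C : Net n) (x : Fin n → Bool) : Fin n → Bool :=
  C.foldl (fun y L => applyLayer L y) x

/-- Ascendingly sorted Boolean vector. -/
def BSorted {n : ℕ} (x : Fin n → Bool) : Prop :=
  ∀ i j : Fin n, i ≤ j → x i ≤ x j

/-- A sorting network: a comparator network sorting every Boolean input. -/
def IsSortingNet {n : ℕ} (C : Net n) : Prop :=
  IsNet C ∧ ∀ x : Fin n → Bool, BSorted (run C x)

/-- The set of outputs of a network on all Boolean inputs. -/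
def outputs {n : ℕ} (C : Net n) : Set (Fin n → Bool) := Set.range (run C)

/-- Apply one layer to a vector of naturals. -/
noncomputable def applyLayerN {n : ℕ} (L : Layer n) (x : Fin n → ℕ) : Fin n → ℕ :=
  fun k =>
    if h1 : ∃ c ∈ L, c.1 = k then min (x h1.choose.1) (x h1.choose.2)
    else if h2 : ∃ c ∈ L, c.2 = k then max (x h2.choose.1) (x h2.choose.2)
    else x k

noncomputable def runN {n : ℕ} (C : Net n) (x : Fin n → ℕ) : Fin n → ℕ :=
  C.foldl (fun y L => applyLayerN L y) x

def NSorted {n : ℕ} (x : Fin n → ℕ) : Prop :=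
  ∀ i j : Fin n, i ≤ j → x i ≤ x j

/-- Permute the coordinates of a Boolean vector by `π` (channel `k`'s value
moves to channel `π k`). -/
def permVec {n : ℕ} (π : Equiv.Perm (Fin n)) (x : Fin n → Bool) : Fin n → Bool :=
  fun i => x (π.symm i)

/-- The image of a set of Boolean vectors under coordinate permutation by `π`. -/
def permSet {n : ℕ} (π : Equiv.Perm (Fin n)) (X : Set (Fin n → Bool)) :
    Set (Fin n → Bool) :=
  permVec π '' X

/-- The image `π(L)` of a layer under a permutation of channels. -/
def permLayer {n : ℕ} (π : Equiv.Perm (Fin n)) (L : Layer n) : Layer n :=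
  L.image fun c => (π c.1, π c.2)

/-- Channel `i` is used by some comparator of the layer `L`. -/
def usedIn {n : ℕ} (L : Layer n) (i : Fin n) : Prop := ∃ c ∈ L, c.1 = i ∨ c.2 = i

/-- Channels `i` and `j` are joined by a comparator of `L`. -/
def Joined {n : ℕ} (L : Layer n) (i j : Fin n) : Prop := (i, j) ∈ L ∨ (j, i) ∈ L

/-- `i` is the smaller channel of some comparator of `L` (a min-channel). -/
def MinChan {n : ℕ} (L : Layer n) (i : Fin n) : Prop := ∃ c ∈ L, c.1 = i

/-- `i` is the larger channel of some comparator of `L` (a max-channel). -/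
def MaxChan {n : ℕ} (L : Layer n) (i : Fin n) : Prop := ∃ c ∈ L, c.2 = i

/-- A two-layer network `[L1, L2]` is redundant if some comparator can be removed
so that the outputs of the result are a permutation of the original outputs. -/
def Redundant {n : ℕ} (L1 L2 : Layer n) : Prop :=
  ∃ π : Equiv.Perm (Fin n),
    (∃ c ∈ L1, outputs [L1.erase c, L2] = permSet π (outputs [L1, L2])) ∨
    (∃ c ∈ L2, outputs [L1, L2.erase c] = permSet π (outputs [L1, L2]))

/-- A two-layer network `[L1, L2]` is saturated if it is non-redundant and no
comparator on two channels unused in the second layer can be added to the second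
layer so as to make the output set a proper subset of a permutation of the
original output set. -/
def Saturated {n : ℕ} (L1 L2 : Layer n) : Prop :=
  ¬ Redundant L1 L2 ∧
  ¬ ∃ (c : Comp n) (π : Equiv.Perm (Fin n)),
      c.1 < c.2 ∧ ¬ usedIn L2 c.1 ∧ ¬ usedIn L2 c.2 ∧
      outputs [L1, insert c L2] ⊂ permSet π (outputs [L1, L2])

/-- Vertices of the graph representation of `C`: the comparators of `C`,
tagged with the index of the layer containing them. -/
def Vertex {n : ℕ} (C : Net n) := {p : ℕ × Comp n // p.2 ∈ C.getD p.1 ∅}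

/-- The channel carrying the min output (`b = false`, label 1) or max output
(`b = true`, label 2) of a comparator. -/
def outChan {n : ℕ} (c : Comp n) (b : Bool) : Fin n := if b then c.2 else c.1

/-- An edge with label `b` (1 for min, 2 for max) from comparator `u` to
comparator `v`: the corresponding output of `u` is an input of `v`, i.e. `v`
is the next comparator on that channel. -/
def Edge {n : ℕ} (C : Net n) (b : Bool) (u v : ℕ × Comp n) : Prop :=
  u.1 < v.1 ∧ (outChan u.2 b = v.2.1 ∨ outChan u.2 b = v.2.2) ∧
  ∀ m, u.1 < m → m < v.1 → ¬ usedIn (C.getD m ∅) (outChan u.2 b)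

/-- The graph representations of `C` and `D` are isomorphic: a bijection of
comparators preserving the labeled edges. -/
def GraphIso {n m : ℕ} (C : Net n) (D : Net m) : Prop :=
  ∃ f : Vertex C ≃ Vertex D,
    ∀ (b : Bool) (u v : Vertex C),
      Edge C b u.val v.val ↔ Edge D b (f u).val (f v).val

/-- The graph representation of `C` is connected. -/
def GraphConnected {n : ℕ} (C : Net n) : Prop :=
  ∀ u v : Vertex C,
    Relation.ReflTransGen
      (fun a b : Vertex C => ∃ ℓ : Bool, Edge C ℓ a.val b.val ∨ Edge C ℓ b.val a.val) u v

/-- Reflection of a comparator: `(i,j) ↦ (n-j+1, n-i+1)` (in 1-based terms). -/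
def reflectComp {n : ℕ} (c : Comp n) : Comp n := (c.2.rev, c.1.rev)

def reflectLayer {n : ℕ} (L : Layer n) : Layer n := L.image reflectComp

/-- Reflection `C^R` of a comparator network. -/
def reflect {n : ℕ} (C : Net n) : Net n := C.map reflectLayer

/-- The first layer `F_n = {(2i-1, 2i) : 1 ≤ i ≤ ⌊n/2⌋}` (0-indexed: `(2i, 2i+1)`). -/
def FLayer (n : ℕ) : Layer n :=
  Finset.univ.filter fun c : Comp n => c.1.val % 2 = 0 ∧ c.2.val = c.1.val + 1

/-- The two-layer networks with first layer `F_n`, parametrized by second layer. -/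
def SecondLayers (n : ℕ) := {L : Layer n // IsLayer L}

/-- The number `|R(G_n)|` of equivalence classes of two-layer networks with
first layer `F_n`, under graph isomorphism `≈`. -/
noncomputable def numClasses (n : ℕ) : ℕ :=
  Nat.card (Quot fun L L' : SecondLayers n =>
    GraphIso ([FLayer n, L.val] : Net n) ([FLayer n, L'.val] : Net n))

/-- Redundant two-layer networks with first layer `F_n`. -/
def RedLayers (n : ℕ) := {L : Layer n // IsLayer L ∧ Redundant (FLayer n) L}

/-- The number of equivalence classes of redundant two-layer networks with
first layer `F_n`, under graph isomorphism `≈`. -/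
noncomputable def numRedClasses (n : ℕ) : ℕ :=
  Nat.card (Quot fun L L' : RedLayers n =>
    GraphIso ([FLayer n, L.val] : Net n) ([FLayer n, L'.val] : Net n))

/-! ### Auxiliary development -/

variable {n : ℕ}

lemma IsLayer.gen {L : Layer n} (h : IsLayer L) : IsGenLayer L :=
  ⟨fun c hc => (h.1 c hc).ne, h.2⟩

lemma comp_unique {L : Layer n} (hL : IsGenLayer L) {c c' : Comp n} (hc : c ∈ L)
    (hc' : c' ∈ L) {i : Fin n} (h1 : c.1 = i ∨ c.2 = i) (h2 : c'.1 = i ∨ c'.2 = i) :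
    c = c' := by
  by_contra hne
  obtain ⟨a, b, d, e⟩ := hL.2 c hc c' hc' hne
  rcases h1 with h1 | h1 <;> rcases h2 with h2 | h2 <;> simp_all

lemma applyLayer_min {L : Layer n} (hL : IsGenLayer L) {i j : Fin n}
    (hij : (i, j) ∈ L) (x : Fin n → Bool) :
    applyLayer L x i = (x i && x j) := by
  have h1 : ∃ c ∈ L, c.1 = i := ⟨(i, j), hij, rfl⟩
  rw [applyLayer, dif_pos h1]
  obtain ⟨hm, h1'⟩ := h1.choose_spec
  have he : h1.choose = (i, j) := comp_unique hL hm hij (Or.inl h1') (Or.inl rfl)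
  rw [he]

lemma applyLayer_max {L : Layer n} (hL : IsGenLayer L) {i j : Fin n}
    (hij : (i, j) ∈ L) (x : Fin n → Bool) :
    applyLayer L x j = (x i || x j) := by
  have h1 : ¬ ∃ c ∈ L, c.1 = j := by
    rintro ⟨c, hc, hcj⟩
    have he : c = (i, j) := comp_unique hL hc hij (Or.inl hcj) (Or.inr rfl)
    rw [he] at hcj
    exact hL.1 _ hij hcj
  have h2 : ∃ c ∈ L, c.2 = j := ⟨(i, j), hij, rfl⟩
  rw [applyLayer, dif_neg h1, dif_pos h2]
  obtain ⟨hm, h2'⟩ := h2.choose_spec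
  have he : h2.choose = (i, j) := comp_unique hL hm hij (Or.inr h2') (Or.inr rfl)
  rw [he]

lemma applyLayer_unused {L : Layer n} {k : Fin n} (h : ¬ usedIn L k) (x : Fin n → Bool) :
    applyLayer L x k = x k := by
  have h1 : ¬ ∃ c ∈ L, c.1 = k := fun ⟨c, hc, e⟩ => h ⟨c, hc, Or.inl e⟩
  have h2 : ¬ ∃ c ∈ L, c.2 = k := fun ⟨c, hc, e⟩ => h ⟨c, hc, Or.inr e⟩
  rw [applyLayer, dif_neg h1, dif_neg h2]

lemma run_nil (x : Fin n → Bool) : run ([] : Net n) x = x := rfl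

lemma run_cons (L : Layer n) (C : Net n) (x : Fin n → Bool) :
    run (L :: C) x = run C (applyLayer L x) := rfl

lemma run_append (A B : Net n) (x : Fin n → Bool) :
    run (A ++ B) x = run B (run A x) := by
  simp [run, List.foldl_append]

lemma permVec_mul (π τ : Equiv.Perm (Fin n)) (x : Fin n → Bool) :
    permVec π (permVec τ x) = permVec (π * τ) x := by
  funext i
  simp [permVec, Equiv.Perm.mul_def, Equiv.symm_trans_apply]

lemma permVec_injective (π : Equiv.Perm (Fin n)) :
    Function.Injective (permVec (n := n) π) := by
  intro y z h
  funext i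
  simpa [permVec] using congrFun h (π i)

lemma permVec_apply (π : Equiv.Perm (Fin n)) (x : Fin n → Bool) (i : Fin n) :
    permVec π x (π i) = x i := by simp [permVec]

lemma permLayer_gen {π : Equiv.Perm (Fin n)} {L : Layer n} (hL : IsGenLayer L) :
    IsGenLayer (permLayer π L) := by
  constructor
  · intro c hc
    obtain ⟨d, hd, rfl⟩ := Finset.mem_image.1 hc
    exact fun h => hL.1 d hd (π.injective h)
  · intro c hc c' hc' hne
    obtain ⟨d, hd, rfl⟩ := Finset.mem_image.1 hc
    obtain ⟨d', hd', rfl⟩ := Finset.mem_image.1 hc'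
    have hdd : d ≠ d' := by rintro rfl; exact hne rfl
    obtain ⟨a, b, e, g⟩ := hL.2 d hd d' hd' hdd
    exact ⟨fun h => a (π.injective h), fun h => b (π.injective h),
      fun h => e (π.injective h), fun h => g (π.injective h)⟩

lemma usedIn_permLayer {π : Equiv.Perm (Fin n)} {L : Layer n} {k : Fin n}
    (h : ¬ usedIn L k) : ¬ usedIn (permLayer π L) (π k) := by
  rintro ⟨c, hc, hck⟩
  obtain ⟨d, hd, rfl⟩ := Finset.mem_image.1 hc
  rcases hck with h1 | h1
  · exact h ⟨d, hd, Or.inl (π.injective h1)⟩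
  · exact h ⟨d, hd, Or.inr (π.injective h1)⟩

lemma applyLayer_perm (π : Equiv.Perm (Fin n)) {L : Layer n} (hL : IsGenLayer L)
    (x : Fin n → Bool) :
    applyLayer (permLayer π L) (permVec π x) = permVec π (applyLayer L x) := by
  funext k
  obtain ⟨k', rfl⟩ := π.surjective k
  by_cases h : usedIn L k'
  · obtain ⟨c, hc, hck⟩ := h
    rcases hck with h1 | h2
    · subst h1
      have hmem : ((π c.1, π c.2) : Comp n) ∈ permLayer π L := Finset.mem_image_of_mem _ hc
      calc applyLayer (permLayer π L) (permVec π x) (π c.1)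
          = (permVec π x (π c.1) && permVec π x (π c.2)) :=
            applyLayer_min (permLayer_gen hL) hmem _
        _ = (x c.1 && x c.2) := by rw [permVec_apply, permVec_apply]
        _ = applyLayer L x c.1 := (applyLayer_min hL hc _).symm
        _ = permVec π (applyLayer L x) (π c.1) := (permVec_apply _ _ _).symm
    · subst h2
      have hmem : ((π c.1, π c.2) : Comp n) ∈ permLayer π L := Finset.mem_image_of_mem _ hc
      calc applyLayer (permLayer π L) (permVec π x) (π c.2)
          = (permVec π x (π c.1) || permVec π x (π c.2)) :=
            applyLayer_max (permLayer_gen hL) hmem _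
        _ = (x c.1 || x c.2) := by rw [permVec_apply, permVec_apply]
        _ = applyLayer L x c.2 := (applyLayer_max hL hc _).symm
        _ = permVec π (applyLayer L x) (π c.2) := (permVec_apply _ _ _).symm
  · rw [applyLayer_unused (usedIn_permLayer h), permVec_apply, permVec_apply,
      applyLayer_unused h]

/-- The network `C` with all channels renamed by `π` (a generalized network). -/
def permNet (π : Equiv.Perm (Fin n)) (C : Net n) : Net n := C.map (permLayer π)

lemma permNet_gen {π : Equiv.Perm (Fin n)} {C : Net n} (hC : IsGenNet C) :
    IsGenNet (permNet π C) := by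
  intro L hL
  obtain ⟨M, hM, rfl⟩ := List.mem_map.1 hL
  exact permLayer_gen (hC M hM)

lemma run_permNet (π : Equiv.Perm (Fin n)) {C : Net n} (hC : IsGenNet C)
    (x : Fin n → Bool) :
    run (permNet π C) (permVec π x) = permVec π (run C x) := by
  induction C generalizing x with
  | nil => rfl
  | cons L T ih =>
    rw [show permNet π (L :: T) = permLayer π L :: permNet π T from rfl, run_cons, run_cons,
      applyLayer_perm π (hC L (List.mem_cons_self)) x,
      ih (fun M hM => hC M (List.mem_cons_of_mem _ hM))]

lemma permVec_one (x : Fin n → Bool) : permVec (1 : Equiv.Perm (Fin n)) x = x := rfl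

lemma standardizeLayer : ∀ (k : ℕ) (L : Layer n), IsGenLayer L →
    (L.filter (fun c => c.2 < c.1)).card = k →
    ∃ L' : Layer n, ∃ ρ : Equiv.Perm (Fin n), IsLayer L' ∧
      ∀ x, applyLayer L' x = permVec ρ (applyLayer L x) := by
  intro k
  induction k with
  | zero =>
    intro L hL hcard
    refine ⟨L, 1, ⟨?_, hL.2⟩, fun x => (permVec_one _).symm⟩
    intro c hc
    have : c ∉ L.filter (fun c => c.2 < c.1) := by
      rw [Finset.card_eq_zero.1 hcard]; exact Finset.notMem_empty _
    rw [Finset.mem_filter] at this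
    push_neg at this
    exact lt_of_le_of_ne (this hc) (hL.1 c hc)
  | succ k ih =>
    intro L hL hcard
    have hne : (L.filter (fun c => c.2 < c.1)).Nonempty := by
      rw [← Finset.card_pos, hcard]; omega
    obtain ⟨c, hcf⟩ := hne
    rw [Finset.mem_filter] at hcf
    obtain ⟨hcL, hbad⟩ := hcf
    set L0 : Layer n := insert (c.2, c.1) (L.erase c) with hL0
    have hmem0 : ((c.2, c.1) : Comp n) ∈ L0 := Finset.mem_insert_self _ _
    have herase_sub : L.erase c ⊆ L := Finset.erase_subset _ _
    -- characterize membership in L0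
    have hmem_iff : ∀ d, d ∈ L0 → d = (c.2, c.1) ∨ (d ∈ L ∧ d ≠ c) := by
      intro d hd
      rcases Finset.mem_insert.1 hd with h | h
      · exact Or.inl h
      · exact Or.inr ⟨herase_sub h, (Finset.mem_erase.1 h).1⟩
    have hgen0 : IsGenLayer L0 := by
      constructor
      · intro d hd
        rcases hmem_iff d hd with rfl | ⟨hdL, _⟩
        · exact fun h => hL.1 c hcL h.symm
        · exact hL.1 d hdL
      · intro d hd d' hd' hne'
        rcases hmem_iff d hd with rfl | ⟨hdL, hdc⟩ <;>
          rcases hmem_iff d' hd' with rfl | ⟨hd'L, hd'c⟩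
        · exact absurd rfl hne'
        · obtain ⟨a, b, e, g⟩ := hL.2 c hcL d' hd'L (Ne.symm hd'c)
          exact ⟨e, g, a, b⟩
        · obtain ⟨a, b, e, g⟩ := hL.2 d hdL c hcL hdc
          exact ⟨b, a, g, e⟩
        · exact hL.2 d hdL d' hd'L hne'
    have hstep : ∀ x, applyLayer L0 x = permVec (Equiv.swap c.1 c.2) (applyLayer L x) := by
      intro x
      funext m
      have hc12 : c.1 ≠ c.2 := hL.1 c hcL
      have hswap : (Equiv.swap c.1 c.2).symm = Equiv.swap c.1 c.2 := Equiv.swap_inv _ _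
      by_cases hm1 : m = c.2
      · subst hm1
        rw [applyLayer_min hgen0 hmem0, permVec, hswap, Equiv.swap_apply_right,
          applyLayer_min hL (show ((c.1, c.2) : Comp n) ∈ L from hcL), Bool.and_comm]
      by_cases hm2 : m = c.1
      · subst hm2
        rw [applyLayer_max hgen0 hmem0, permVec, hswap, Equiv.swap_apply_left,
          applyLayer_max hL (show ((c.1, c.2) : Comp n) ∈ L from hcL), Bool.or_comm]
      · have hfix : permVec (Equiv.swap c.1 c.2) (applyLayer L x) m
            = applyLayer L x m := by
          rw [permVec, hswap, Equiv.swap_apply_of_ne_of_ne hm2 hm1]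
        rw [hfix]
        by_cases hu : usedIn L m
        · obtain ⟨d, hdL, hdm⟩ := hu
          have hdc : d ≠ c := by
            rintro rfl
            rcases hdm with h | h
            · exact hm2 h.symm
            · exact hm1 h.symm
          have hd0 : d ∈ L0 := Finset.mem_insert_of_mem (Finset.mem_erase.2 ⟨hdc, hdL⟩)
          rcases hdm with h | h
          · subst h
            rw [applyLayer_min hgen0 (show ((d.1, d.2) : Comp n) ∈ L0 from hd0),
              applyLayer_min hL (show ((d.1, d.2) : Comp n) ∈ L from hdL)]
          · subst h
            rw [applyLayer_max hgen0 (show ((d.1, d.2) : Comp n) ∈ L0 from hd0),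
              applyLayer_max hL (show ((d.1, d.2) : Comp n) ∈ L from hdL)]
        · have hu0 : ¬ usedIn L0 m := by
            rintro ⟨d, hd, hdm⟩
            rcases hmem_iff d hd with rfl | ⟨hdL, _⟩
            · rcases hdm with h | h
              · exact hm1 h.symm
              · exact hm2 h.symm
            · exact hu ⟨d, hdL, hdm⟩
          rw [applyLayer_unused hu0, applyLayer_unused hu]
    have hcard0 : (L0.filter (fun c => c.2 < c.1)).card = k := by
      have h1 : L0.filter (fun c => c.2 < c.1) = (L.erase c).filter (fun c => c.2 < c.1) := by
        rw [hL0, Finset.filter_insert, if_neg (by simp; omega)]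
      rw [h1, Finset.filter_erase, Finset.card_erase_of_mem (Finset.mem_filter.2 ⟨hcL, hbad⟩),
        hcard]
      omega
    obtain ⟨L', ρ', hL', hsem⟩ := ih L0 hgen0 hcard0
    refine ⟨L', ρ' * Equiv.swap c.1 c.2, hL', fun x => ?_⟩
    rw [hsem x, hstep x, permVec_mul]

lemma untangle : ∀ (m : ℕ) (E : Net n), E.length = m → IsGenNet E →
    ∃ E' : Net n, ∃ ρ : Equiv.Perm (Fin n), IsNet E' ∧ E'.length = E.length ∧
      ∀ x, run E' x = permVec ρ (run E x) := by
  intro m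
  induction m with
  | zero =>
    rintro E hlen -
    rw [List.length_eq_zero_iff] at hlen
    subst hlen
    exact ⟨[], 1, fun L hL => absurd hL List.not_mem_nil, rfl,
      fun x => (permVec_one _).symm⟩
  | succ m ih =>
    intro E hlen hE
    match E, hlen with
    | L :: T, hlen =>
      obtain ⟨Ls, ρ₀, hLs, hsemL⟩ :=
        standardizeLayer (L.filter (fun c => c.2 < c.1)).card L
          (hE L (List.mem_cons_self)) rfl
      have hT : IsGenNet T := fun M hM => hE M (List.mem_cons_of_mem _ hM)
      have hT1 : IsGenNet (permNet ρ₀ T) := permNet_gen hT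
      have hlen1 : (permNet ρ₀ T).length = m := by
        simp only [permNet, List.length_map]
        simpa using hlen
      obtain ⟨T', ρ₁, hT', hlenT', hsemT⟩ := ih (permNet ρ₀ T) hlen1 hT1
      refine ⟨Ls :: T', ρ₁ * ρ₀, ?_, ?_, ?_⟩
      · intro M hM
        rcases List.mem_cons.1 hM with rfl | hM
        · exact hLs
        · exact hT' M hM
      · simp only [List.length_cons, hlenT', hlen1]
        simpa using hlen.symm
      · intro x
        rw [run_cons, run_cons, hsemT, hsemL, run_permNet ρ₀ hT, permVec_mul]

lemma bool_and_of_le {a b : Bool} (h : a ≤ b) : (a && b) = a := by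
  revert h; cases a <;> cases b <;> decide

lemma bool_or_of_le {a b : Bool} (h : a ≤ b) : (a || b) = b := by
  revert h; cases a <;> cases b <;> decide

lemma applyLayer_sorted {L : Layer n} (hL : IsLayer L) {x : Fin n → Bool}
    (hx : BSorted x) : applyLayer L x = x := by
  funext k
  by_cases h : usedIn L k
  · obtain ⟨c, hc, hck⟩ := h
    have hle : x c.1 ≤ x c.2 := hx c.1 c.2 (hL.1 c hc).le
    rcases hck with h | h
    · subst h
      rw [applyLayer_min hL.gen (show ((c.1, c.2) : Comp n) ∈ L from hc),
        bool_and_of_le hle]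
    · subst h
      rw [applyLayer_max hL.gen (show ((c.1, c.2) : Comp n) ∈ L from hc),
        bool_or_of_le hle]
  · exact applyLayer_unused h x

lemma run_sorted {C : Net n} (hC : IsNet C) {x : Fin n → Bool}
    (hx : BSorted x) : run C x = x := by
  induction C with
  | nil => rfl
  | cons L T ih =>
    rw [run_cons, applyLayer_sorted (hC L (List.mem_cons_self)) hx]
    exact ih (fun M hM => hC M (List.mem_cons_of_mem _ hM))

/-! ### Dataflow analysis of comparator networks -/

/-- State of the network after the first `t` layers. -/
noncomputable def st (C : Net n) (t : ℕ) (x : Fin n → Bool) : Fin n → Bool :=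
  run (C.take t) x

/-- Channel `i` is used at time `t`. -/
def usedAt (C : Net n) (t : ℕ) (i : Fin n) : Prop := usedIn (C.getD t ∅) i

/-- `p` is a comparator (vertex) of `C`. -/
def MemV (C : Net n) (p : ℕ × Comp n) : Prop := p.2 ∈ C.getD p.1 ∅

/-- The `b`-output value of comparator `p` on input `x`. -/
noncomputable def outv (C : Net n) (x : Fin n → Bool) (p : ℕ × Comp n) (b : Bool) : Bool :=
  st C (p.1 + 1) x (outChan p.2 b)

lemma st_zero (C : Net n) (x : Fin n → Bool) : st C 0 x = x := rfl

lemma memV_lt {C : Net n} {p : ℕ × Comp n} (hp : MemV C p) : p.1 < C.length := by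
  by_contra h
  rw [MemV, List.getD_eq_default _ _ (le_of_not_gt h)] at hp
  exact absurd hp (Finset.notMem_empty _)

lemma usedAt_lt {C : Net n} {t : ℕ} {i : Fin n} (h : usedAt C t i) : t < C.length := by
  by_contra hc
  rw [usedAt, List.getD_eq_default _ _ (le_of_not_gt hc)] at h
  obtain ⟨c, hc', -⟩ := h
  exact absurd hc' (Finset.notMem_empty _)

lemma layer_mem {C : Net n} {t : ℕ} (h : t < C.length) : C.getD t ∅ ∈ C := by
  rw [List.getD_eq_getElem _ _ h]
  exact List.getElem_mem _

lemma st_succ {C : Net n} {t : ℕ} (h : t < C.length) (x : Fin n → Bool) :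
    st C (t + 1) x = applyLayer (C.getD t ∅) (st C t x) := by
  rw [st, st, List.take_succ, run_append]
  have h1 : C[t]? = some (C.getD t ∅) := by
    rw [List.getD_eq_getElem _ _ h, List.getElem?_eq_getElem h]
  rw [h1]
  rfl

lemma st_of_ge {C : Net n} {t : ℕ} (h : C.length ≤ t) (x : Fin n → Bool) :
    st C t x = run C x := by
  rw [st, List.take_of_length_le h]

lemma st_stable {C : Net n} {i : Fin n} {t t' : ℕ} (htt : t ≤ t')
    (h : ∀ s, t ≤ s → s < t' → ¬ usedAt C s i) (x : Fin n → Bool) :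
    st C t' x i = st C t x i := by
  induction t', htt using Nat.le_induction with
  | base => rfl
  | succ t' ht' ih =>
    have step : st C (t' + 1) x i = st C t' x i := by
      by_cases hlt : t' < C.length
      · rw [st_succ hlt, applyLayer_unused (h t' ht' (by omega))]
      · rw [st_of_ge (by omega) x, st_of_ge (le_of_not_gt hlt) x]
    rw [step]
    exact ih (fun s hs hs' => h s hs (by omega))

lemma outChan_uses (c : Comp n) (b : Bool) : c.1 = outChan c b ∨ c.2 = outChan c b := by
  cases b
  · exact Or.inl rfl
  · exact Or.inr rfl

lemma usedAt_of_memV {C : Net n} {p : ℕ × Comp n} (hp : MemV C p) (b : Bool) :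
    usedAt C p.1 (outChan p.2 b) := ⟨p.2, hp, outChan_uses _ _⟩

lemma outChan_inj {c : Comp n} (hc : c.1 ≠ c.2) {b b' : Bool}
    (h : outChan c b = outChan c b') : b = b' := by
  cases b <;> cases b' <;>
    first
    | rfl
    | exact absurd h hc
    | exact absurd h.symm hc

lemma outv_false {C : Net n} (hC : IsGenNet C) {p : ℕ × Comp n} (hp : MemV C p)
    (x : Fin n → Bool) :
    outv C x p false = (st C p.1 x p.2.1 && st C p.1 x p.2.2) := by
  have hlt := memV_lt hp
  rw [outv, st_succ hlt]
  exact applyLayer_min (hC _ (layer_mem hlt)) (show (p.2.1, p.2.2) ∈ _ from hp) _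

lemma outv_true {C : Net n} (hC : IsGenNet C) {p : ℕ × Comp n} (hp : MemV C p)
    (x : Fin n → Bool) :
    outv C x p true = (st C p.1 x p.2.1 || st C p.1 x p.2.2) := by
  have hlt := memV_lt hp
  rw [outv, st_succ hlt]
  exact applyLayer_max (hC _ (layer_mem hlt)) (show (p.2.1, p.2.2) ∈ _ from hp) _

lemma exists_lastUse {C : Net n} {t : ℕ} {i : Fin n}
    (h : ∃ s, s < t ∧ usedAt C s i) :
    ∃ (w : ℕ × Comp n) (b : Bool), MemV C w ∧ outChan w.2 b = i ∧ w.1 < t ∧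
      (∀ s, w.1 < s → s < t → ¬ usedAt C s i) := by
  obtain ⟨s, hst, hs⟩ := h
  have ht1 : 1 ≤ t := by omega
  have hsp : s ≤ t - 1 := by omega
  set s0 := Nat.findGreatest (fun s => usedAt C s i) (t - 1) with hs0
  have hP : usedAt C s0 i :=
    Nat.findGreatest_spec (P := fun s => usedAt C s i) hsp hs
  obtain ⟨c, hcL, huse⟩ := hP
  refine ⟨(s0, c), if c.1 = i then false else true, hcL, ?_, by
      have := Nat.findGreatest_le (P := fun s => usedAt C s i) (t - 1); omega, ?_⟩
  · by_cases h1 : c.1 = i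
    · simpa [outChan, h1]
    · have h2 : c.2 = i := huse.resolve_left h1
      simpa [outChan, h1]
  · intro s' hs' hs't hu
    exact Nat.findGreatest_is_greatest hs' (by omega) hu

lemma value_of_edge {C : Net n} {w v : ℕ × Comp n} {b : Bool}
    (he : Edge C b w v) (x : Fin n → Bool) :
    st C v.1 x (outChan w.2 b) = outv C x w b :=
  st_stable he.1 (fun s hs hs' => he.2.2 s hs hs') x

lemma slot_unique {C : Net n} (hC : IsGenNet C) {w w' : ℕ × Comp n} {b b' : Bool}
    {t : ℕ} {i : Fin n}
    (hw : MemV C w) (hw' : MemV C w') (ho : outChan w.2 b = i) (ho' : outChan w'.2 b' = i)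
    (hlt : w.1 < t) (hlt' : w'.1 < t)
    (hgap : ∀ s, w.1 < s → s < t → ¬ usedAt C s i)
    (hgap' : ∀ s, w'.1 < s → s < t → ¬ usedAt C s i) :
    w = w' ∧ b = b' := by
  have hu : usedAt C w.1 i := ho ▸ usedAt_of_memV hw b
  have hu' : usedAt C w'.1 i := ho' ▸ usedAt_of_memV hw' b'
  have hteq : w.1 = w'.1 := by
    rcases lt_trichotomy w.1 w'.1 with hlt1 | heq | hlt1
    · exact absurd hu' (hgap _ hlt1 hlt')
    · exact heq
    · exact absurd hu (hgap' _ hlt1 hlt)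
  have hgen : IsGenLayer (C.getD w.1 ∅) := hC _ (layer_mem (memV_lt hw))
  have hw'2 : w'.2 ∈ C.getD w.1 ∅ := by rw [hteq]; exact hw'
  have hcc : w.2 = w'.2 := by
    refine comp_unique hgen hw hw'2 (i := i) ?_ ?_
    · rcases outChan_uses w.2 b with h | h
      · exact Or.inl (h.trans ho)
      · exact Or.inr (h.trans ho)
    · rcases outChan_uses w'.2 b' with h | h
      · exact Or.inl (h.trans ho')
      · exact Or.inr (h.trans ho')
  have hwe : w = w' := Prod.ext hteq hcc
  refine ⟨hwe, outChan_inj (hgen.1 w.2 hw) ?_⟩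
  rw [ho, hwe, ho']

lemma exists_edge_of_later_use {C : Net n} {w : ℕ × Comp n} {b : Bool}
    (h : ∃ s, w.1 < s ∧ usedAt C s (outChan w.2 b)) :
    ∃ v, MemV C v ∧ Edge C b w v := by
  set i := outChan w.2 b with hi
  have h' : ∃ m, usedAt C (w.1 + 1 + m) i := by
    obtain ⟨s, hs, hu⟩ := h
    exact ⟨s - (w.1 + 1), by rwa [show w.1 + 1 + (s - (w.1 + 1)) = s by omega]⟩
  obtain ⟨c, hc, huse⟩ := Nat.find_spec h'
  refine ⟨(w.1 + 1 + Nat.find h', c), hc, ⟨by omega, ?_, ?_⟩⟩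
  · rcases huse with h1 | h1
    · exact Or.inl h1.symm
    · exact Or.inr h1.symm
  · intro m hm hm' hu
    have hk : m - (w.1 + 1) < Nat.find h' := by omega
    exact Nat.find_min h' hk (by rwa [show w.1 + 1 + (m - (w.1 + 1)) = m by omega])

lemma no_later_use_of_no_edge {C : Net n} {w : ℕ × Comp n} {b : Bool}
    (h : ¬ ∃ v, MemV C v ∧ Edge C b w v) :
    ∀ s, w.1 < s → ¬ usedAt C s (outChan w.2 b) :=
  fun s hs hu => h (exists_edge_of_later_use ⟨s, hs, hu⟩)

lemma final_value {C : Net n} {w : ℕ × Comp n} {b : Bool} (hw : MemV C w)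
    (h : ∀ s, w.1 < s → ¬ usedAt C s (outChan w.2 b)) (x : Fin n → Bool) :
    run C x (outChan w.2 b) = outv C x w b := by
  rw [← st_of_ge (le_refl C.length) x]
  exact st_stable (memV_lt hw) (fun s hs hs' => h s hs) x

lemma final_value_unused {C : Net n} {i : Fin n} (h : ∀ s, ¬ usedAt C s i)
    (x : Fin n → Bool) : run C x i = x i := by
  rw [← st_of_ge (le_refl C.length) x]
  exact st_stable (Nat.zero_le _) (fun s _ _ => h s) x

/-! ### Source channels and graph isomorphism -/

/-- The two channels of a comparator vertex. -/
noncomputable def chans (p : ℕ × Comp n) : Finset (Fin n) := {p.2.1, p.2.2}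

/-- `i` is untouched before the layer of `p`. -/
def isSrc (C : Net n) (p : ℕ × Comp n) (i : Fin n) : Prop := ∀ s < p.1, ¬ usedAt C s i

noncomputable def srcChans (C : Net n) (p : ℕ × Comp n) : Finset (Fin n) :=
  (chans p).filter (isSrc C p)

noncomputable def nonsrcChans (C : Net n) (p : ℕ × Comp n) : Finset (Fin n) :=
  (chans p).filter (fun i => ¬ isSrc C p i)

lemma mem_chans {p : ℕ × Comp n} {i : Fin n} :
    i ∈ chans p ↔ i = p.2.1 ∨ i = p.2.2 := by simp [chans]

lemma usedAt_of_chans {C : Net n} {p : ℕ × Comp n} (hp : MemV C p) {i : Fin n}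
    (hi : i ∈ chans p) : usedAt C p.1 i := by
  refine ⟨p.2, hp, ?_⟩
  rcases mem_chans.1 hi with h | h
  · exact Or.inl h.symm
  · exact Or.inr h.symm

lemma chans_card {C : Net n} (hC : IsGenNet C) {p : ℕ × Comp n} (hp : MemV C p) :
    (chans p).card = 2 :=
  Finset.card_pair ((hC _ (layer_mem (memV_lt hp))).1 p.2 hp)

lemma src_nonsrc_card (C : Net n) (p : ℕ × Comp n) :
    (srcChans C p).card + (nonsrcChans C p).card = (chans p).card :=
  Finset.card_filter_add_card_filter_not _

lemma src_vertex_unique {C : Net n} (hC : IsGenNet C) {w w' : ℕ × Comp n}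
    (hw : MemV C w) (hw' : MemV C w') {i : Fin n}
    (h1 : i ∈ srcChans C w) (h2 : i ∈ srcChans C w') : w = w' := by
  obtain ⟨hc1, hs1⟩ := Finset.mem_filter.1 h1
  obtain ⟨hc2, hs2⟩ := Finset.mem_filter.1 h2
  have hu1 : usedAt C w.1 i := usedAt_of_chans hw hc1
  have hu2 : usedAt C w'.1 i := usedAt_of_chans hw' hc2
  have hteq : w.1 = w'.1 := by
    rcases lt_trichotomy w.1 w'.1 with hlt | heq | hlt
    · exact absurd hu1 (hs2 _ hlt)
    · exact heq
    · exact absurd hu2 (hs1 _ hlt)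
  have hgen : IsGenLayer (C.getD w.1 ∅) := hC _ (layer_mem (memV_lt hw))
  have hw'2 : w'.2 ∈ C.getD w.1 ∅ := by rw [hteq]; exact hw'
  refine Prod.ext hteq (comp_unique hgen hw hw'2 (i := i) ?_ ?_)
  · rcases mem_chans.1 hc1 with h | h
    · exact Or.inl h.symm
    · exact Or.inr h.symm
  · rcases mem_chans.1 hc2 with h | h
    · exact Or.inl h.symm
    · exact Or.inr h.symm

/-- An edge into a vertex whose source channel is a given non-source channel. -/
lemma nonsrc_edge {C : Net n} {u : ℕ × Comp n} (hu : MemV C u) {i : Fin n}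
    (hi : i ∈ nonsrcChans C u) :
    ∃ (w : ℕ × Comp n) (b : Bool), MemV C w ∧ Edge C b w u ∧ outChan w.2 b = i := by
  obtain ⟨hc, hns⟩ := Finset.mem_filter.1 hi
  rw [isSrc] at hns
  push_neg at hns
  obtain ⟨s, hst, hs⟩ := hns
  obtain ⟨w, b, hw, ho, hlt, hgap⟩ := exists_lastUse ⟨s, hst, hs⟩
  refine ⟨w, b, hw, ⟨hlt, ?_, ?_⟩, ho⟩
  · rw [ho]
    exact mem_chans.1 hc
  · intro m hm hm'
    rw [ho]
    exact hgap m hm hm'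

/-- Any edge into `u` arrives on a non-source channel of `u`. -/
lemma edge_target_nonsrc {C : Net n} {w u : ℕ × Comp n} {b : Bool}
    (hw : MemV C w) (he : Edge C b w u) :
    outChan w.2 b ∈ nonsrcChans C u := by
  refine Finset.mem_filter.2 ⟨?_, ?_⟩
  · rcases he.2.1 with h | h
    · exact mem_chans.2 (Or.inl h)
    · exact mem_chans.2 (Or.inr h)
  · intro hsrc
    exact hsrc w.1 he.1 (usedAt_of_memV hw b)

lemma nonsrc_card_le {C1 C2 : Net n} (hC2 : IsGenNet C2)
    (f : Vertex C1 ≃ Vertex C2)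
    (hf : ∀ (b : Bool) (u v : Vertex C1),
      Edge C1 b u.val v.val → Edge C2 b (f u).val (f v).val)
    (u : Vertex C1) :
    (nonsrcChans C1 u.val).card ≤ (nonsrcChans C2 (f u).val).card := by
  classical
  have hex : ∀ i ∈ nonsrcChans C1 u.val, ∃ j, j ∈ nonsrcChans C2 (f u).val ∧
      ∃ (w : Vertex C1) (b : Bool), Edge C2 b (f w).val (f u).val ∧
        outChan (f w).val.2 b = j ∧ outChan w.val.2 b = i := by
    intro i hi
    obtain ⟨w, b, hw, he, ho⟩ := nonsrc_edge u.prop hi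
    have he2 : Edge C2 b (f ⟨w, hw⟩).val (f u).val := hf b ⟨w, hw⟩ u he
    exact ⟨outChan (f ⟨w, hw⟩).val.2 b, edge_target_nonsrc (f ⟨w, hw⟩).prop he2,
      ⟨w, hw⟩, b, he2, rfl, ho⟩
  set F : Fin n → Fin n := fun i =>
    if h : ∃ j, j ∈ nonsrcChans C2 (f u).val ∧
        ∃ (w : Vertex C1) (b : Bool), Edge C2 b (f w).val (f u).val ∧
          outChan (f w).val.2 b = j ∧ outChan w.val.2 b = i then h.choose else i with hF
  refine Finset.card_le_card_of_injOn F ?_ ?_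
  · intro i hi
    have hh := hex i hi
    rw [hF]
    simp only
    rw [dif_pos hh]
    exact hh.choose_spec.1
  · intro i hi i' hi' heq
    have hhi := hex i hi
    have hhi' := hex i' hi'
    rw [hF] at heq
    simp only at heq
    rw [dif_pos hhi, dif_pos hhi'] at heq
    obtain ⟨hj1, w, b, he, hoj, hoi⟩ := hhi.choose_spec
    obtain ⟨hj1', w', b', he', hoj', hoi'⟩ := hhi'.choose_spec
    have hje : outChan (f w).val.2 b = outChan (f w').val.2 b' := by
      rw [hoj, hoj', heq]
    have := slot_unique hC2 (f w).prop (f w').prop (i := outChan (f w).val.2 b) rfl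
      hje.symm he.1 he'.1 (fun s hs hs' => he.2.2 s hs hs')
      (fun s hs hs' => by
        have := he'.2.2 s hs hs'
        rwa [← hje] at this)
    obtain ⟨hww, hbb⟩ := this
    have hfw : f w = f w' := Subtype.ext hww
    have hww' : w = w' := f.injective hfw
    rw [← hoi, ← hoi', hww', hbb]

noncomputable def finsetEquiv {α : Type*} {s t : Finset α} (h : s.card = t.card) :
    {x // x ∈ s} ≃ {x // x ∈ t} :=
  Fintype.equivOfCardEq (by
    rw [show Fintype.card {x // x ∈ s} = s.card from Fintype.card_coe s,
      show Fintype.card {x // x ∈ t} = t.card from Fintype.card_coe t, h])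

lemma srcChans_card_eq {C1 C2 : Net n} (hC1 : IsGenNet C1) (hC2 : IsGenNet C2)
    (f : Vertex C1 ≃ Vertex C2)
    (hf : ∀ (b : Bool) (u v : Vertex C1),
      Edge C1 b u.val v.val ↔ Edge C2 b (f u).val (f v).val)
    (u : Vertex C1) :
    (srcChans C1 u.val).card = (srcChans C2 (f u).val).card := by
  have h1 := nonsrc_card_le hC2 f (fun b u v he => (hf b u v).1 he) u
  have hf' : ∀ (b : Bool) (u v : Vertex C2),
      Edge C2 b u.val v.val → Edge C1 b (f.symm u).val (f.symm v).val := by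
    intro b u v he
    have h := (hf b (f.symm u) (f.symm v)).2
    simp only [Equiv.apply_symm_apply] at h
    exact h he
  have h2 := nonsrc_card_le hC1 f.symm hf' (f u)
  rw [Equiv.symm_apply_apply] at h2
  have e1 := src_nonsrc_card C1 u.val
  have e2 := src_nonsrc_card C2 (f u).val
  rw [chans_card hC1 u.prop] at e1
  rw [chans_card hC2 (f u).prop] at e2
  omega

lemma exists_src_vertex {C : Net n} {i : Fin n} (hi : ∃ t, usedAt C t i) :
    ∃ u : Vertex C, i ∈ srcChans C u.val := by
  classical
  obtain ⟨c, hc, huse⟩ := Nat.find_spec hi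
  refine ⟨⟨(Nat.find hi, c), hc⟩, Finset.mem_filter.2 ⟨?_, ?_⟩⟩
  · rcases huse with h | h
    · exact mem_chans.2 (Or.inl h.symm)
    · exact mem_chans.2 (Or.inr h.symm)
  · intro s hs
    exact Nat.find_min hi hs

lemma exists_final_slot {C : Net n} {i : Fin n} (hi : ∃ t, usedAt C t i) :
    ∃ (w : Vertex C) (b : Bool), outChan w.val.2 b = i ∧
      ∀ s, w.val.1 < s → ¬ usedAt C s i := by
  obtain ⟨t, ht⟩ := hi
  obtain ⟨w, b, hw, ho, hlt, hgap⟩ :=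
    exists_lastUse (t := C.length) ⟨t, usedAt_lt ht, ht⟩
  exact ⟨⟨w, hw⟩, b, ho, fun s hs hu => hgap s hs (usedAt_lt hu) hu⟩

noncomputable def usedF (C : Net n) : Finset (Fin n) :=
  Finset.univ.filter (fun i => ∃ t, usedAt C t i)

noncomputable def unusedF (C : Net n) : Finset (Fin n) :=
  Finset.univ.filter (fun i => ¬ ∃ t, usedAt C t i)

lemma mem_usedF_of_srcChans {C : Net n} {w : Vertex C} {j : Fin n}
    (h : j ∈ srcChans C w.val) : j ∈ usedF C :=
  Finset.mem_filter.2 ⟨Finset.mem_univ _,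
    ⟨w.val.1, usedAt_of_chans w.prop (Finset.filter_subset _ _ h)⟩⟩

lemma iso_outputs {C1 C2 : Net n} (hC1 : IsNet C1) (hC2 : IsNet C2)
    (hiso : GraphIso C1 C2) :
    ∃ (π : Equiv.Perm (Fin n)) (g : Fin n → Fin n),
      ∀ x, run C2 x = permVec π (run C1 (x ∘ g)) := by
  classical
  obtain ⟨f, hf⟩ := hiso
  have hg1 : IsGenNet C1 := fun L hL => (hC1 L hL).gen
  have hg2 : IsGenNet C2 := fun L hL => (hC2 L hL).gen
  have hcard : ∀ u : Vertex C1, (srcChans C1 u.val).card = (srcChans C2 (f u).val).card :=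
    srcChans_card_eq hg1 hg2 f hf
  let e : ∀ u : Vertex C1,
      {y // y ∈ srcChans C1 u.val} ≃ {y // y ∈ srcChans C2 (f u).val} :=
    fun u => finsetEquiv (hcard u)
  -- congruence helpers for `e`
  have eCongr : ∀ (a a' : Vertex C1) (p : {y // y ∈ srcChans C1 a.val})
      (p' : {y // y ∈ srcChans C1 a'.val}), a = a' → (↑p : Fin n) = ↑p' →
      (↑(e a p) : Fin n) = ↑(e a' p') := by
    rintro a a' p p' rfl hp
    rw [Subtype.ext hp]
  have eInj : ∀ (a a' : Vertex C1) (p : {y // y ∈ srcChans C1 a.val})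
      (p' : {y // y ∈ srcChans C1 a'.val}), a = a' →
      (↑(e a p) : Fin n) = ↑(e a' p') → (↑p : Fin n) = ↑p' := by
    rintro a a' p p' rfl h
    rw [(e a).injective (Subtype.ext h)]
  have eSymmInj : ∀ (a a' : Vertex C1) (q : {y // y ∈ srcChans C2 (f a).val})
      (q' : {y // y ∈ srcChans C2 (f a').val}), a = a' →
      (↑((e a).symm q) : Fin n) = ↑((e a').symm q') → (↑q : Fin n) = ↑q' := by
    rintro a a' q q' rfl h
    rw [(e a).symm.injective (Subtype.ext h)]
  -- first-use vertices in C1 and C2, last-use slots in C2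
  choose u0 hu0s using fun (i : Fin n) (hi : ∃ t, usedAt C1 t i) => exists_src_vertex hi
  choose v0 hv0s using fun (j : Fin n) (hj : ∃ t, usedAt C2 t j) => exists_src_vertex hj
  choose w1 b1 hw1o hw1g using
    fun (j : Fin n) (hj : ∃ t, usedAt C2 t j) => exists_final_slot hj
  -- counting used channels
  have husedle : (usedF C1).card ≤ (usedF C2).card := by
    set G : Fin n → Fin n := fun i =>
      if hi : ∃ t, usedAt C1 t i then ↑(e (u0 i hi) ⟨i, hu0s i hi⟩) else i with hG
    refine Finset.card_le_card_of_injOn G ?_ ?_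
    · intro i hi
      have hiu := (Finset.mem_filter.1 hi).2
      have hGi : G i = ↑(e (u0 i hiu) ⟨i, hu0s i hiu⟩) := dif_pos hiu
      rw [hGi]
      exact mem_usedF_of_srcChans (e (u0 i hiu) ⟨i, hu0s i hiu⟩).prop
    · intro i hi i' hi' heq
      have hiu := (Finset.mem_filter.1 hi).2
      have hiu' := (Finset.mem_filter.1 hi').2
      have hGi : G i = ↑(e (u0 i hiu) ⟨i, hu0s i hiu⟩) := dif_pos hiu
      have hGi' : G i' = ↑(e (u0 i' hiu') ⟨i', hu0s i' hiu'⟩) := dif_pos hiu'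
      rw [hGi, hGi'] at heq
      have hj : (↑(e (u0 i hiu) ⟨i, hu0s i hiu⟩) : Fin n)
          ∈ srcChans C2 (f (u0 i hiu)).val := (e (u0 i hiu) ⟨i, hu0s i hiu⟩).prop
      have hj' : (↑(e (u0 i hiu) ⟨i, hu0s i hiu⟩) : Fin n)
          ∈ srcChans C2 (f (u0 i' hiu')).val := by
        rw [heq]; exact (e (u0 i' hiu') ⟨i', hu0s i' hiu'⟩).prop
      have huu : u0 i hiu = u0 i' hiu' := f.injective (Subtype.ext
        (src_vertex_unique hg2 (f (u0 i hiu)).prop (f (u0 i' hiu')).prop hj hj'))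
      exact eInj _ _ _ _ huu heq
  have husedge : (usedF C2).card ≤ (usedF C1).card := by
    have hmem : ∀ (j : Fin n) (hj : ∃ t, usedAt C2 t j),
        j ∈ srcChans C2 (f (f.symm (v0 j hj))).val := by
      intro j hj
      rw [Equiv.apply_symm_apply]
      exact hv0s j hj
    set G : Fin n → Fin n := fun j =>
      if hj : ∃ t, usedAt C2 t j then
        ↑((e (f.symm (v0 j hj))).symm ⟨j, hmem j hj⟩) else j with hG
    refine Finset.card_le_card_of_injOn G ?_ ?_
    · intro j hj
      have hju := (Finset.mem_filter.1 hj).2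
      have hGj : G j = ↑((e (f.symm (v0 j hju))).symm ⟨j, hmem j hju⟩) := dif_pos hju
      rw [hGj]
      exact mem_usedF_of_srcChans ((e (f.symm (v0 j hju))).symm ⟨j, hmem j hju⟩).prop
    · intro j hj j' hj' heq
      have hju := (Finset.mem_filter.1 hj).2
      have hju' := (Finset.mem_filter.1 hj').2
      have hGj : G j = ↑((e (f.symm (v0 j hju))).symm ⟨j, hmem j hju⟩) := dif_pos hju
      have hGj' : G j' = ↑((e (f.symm (v0 j' hju'))).symm ⟨j', hmem j' hju'⟩) := dif_pos hju'
      rw [hGj, hGj'] at heq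
      have hi : (↑((e (f.symm (v0 j hju))).symm ⟨j, hmem j hju⟩) : Fin n)
          ∈ srcChans C1 (f.symm (v0 j hju)).val :=
        ((e (f.symm (v0 j hju))).symm ⟨j, hmem j hju⟩).prop
      have hi' : (↑((e (f.symm (v0 j hju))).symm ⟨j, hmem j hju⟩) : Fin n)
          ∈ srcChans C1 (f.symm (v0 j' hju')).val := by
        rw [heq]; exact ((e (f.symm (v0 j' hju'))).symm ⟨j', hmem j' hju'⟩).prop
      have huu : f.symm (v0 j hju) = f.symm (v0 j' hju') :=
        Subtype.ext (src_vertex_unique hg1 (f.symm (v0 j hju)).prop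
          (f.symm (v0 j' hju')).prop hi hi')
      exact eSymmInj _ _ _ _ huu heq
  have hunusedcard : (unusedF C2).card = (unusedF C1).card := by
    have h1 := Finset.card_filter_add_card_filter_not
      (s := (Finset.univ : Finset (Fin n))) (p := fun i => ∃ t, usedAt C1 t i)
    have h2 := Finset.card_filter_add_card_filter_not
      (s := (Finset.univ : Finset (Fin n))) (p := fun j => ∃ t, usedAt C2 t j)
    have h3 := le_antisymm husedle husedge
    simp only [usedF] at h3
    simp only [unusedF]
    omega
  let uσ : {y // y ∈ unusedF C2} ≃ {y // y ∈ unusedF C1} := finsetEquiv hunusedcard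
  let g : Fin n → Fin n := fun i =>
    if hi : ∃ t, usedAt C1 t i then ↑(e (u0 i hi) ⟨i, hu0s i hi⟩)
    else ↑(uσ.symm ⟨i, Finset.mem_filter.2 ⟨Finset.mem_univ _, hi⟩⟩)
  -- MAIN VALUATION LEMMA
  have main : ∀ (t : ℕ) (u : Vertex C1), u.val.1 < t → ∀ (b : Bool) (x : Fin n → Bool),
      outv C2 x (f u).val b = outv C1 (fun i => x (g i)) u.val b := by
    intro t
    induction t with
    | zero => intro u hu; omega
    | succ t ih =>
      intro u hu b x
      have matchCh : ∀ i, i ∈ chans u.val → ∃ j, j ∈ chans (f u).val ∧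
          st C2 (f u).val.1 x j = st C1 u.val.1 (fun i => x (g i)) i ∧
          ((∃ p : {y // y ∈ srcChans C1 u.val}, ↑p = i ∧ j = ↑(e u p)) ∨
           (∃ (w : Vertex C1) (b0 : Bool), Edge C2 b0 (f w).val (f u).val ∧
              j = outChan (f w).val.2 b0 ∧ i = outChan w.val.2 b0)) := by
        intro i hi
        by_cases hsrc : isSrc C1 u.val i
        · have hpm : i ∈ srcChans C1 u.val := Finset.mem_filter.2 ⟨hi, hsrc⟩
          have hjsrc := Finset.mem_filter.1 (e u ⟨i, hpm⟩).prop
          refine ⟨↑(e u ⟨i, hpm⟩), hjsrc.1, ?_, Or.inl ⟨⟨i, hpm⟩, rfl, rfl⟩⟩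
          have hv2 : st C2 (f u).val.1 x ↑(e u ⟨i, hpm⟩) = x ↑(e u ⟨i, hpm⟩) :=
            st_stable (Nat.zero_le _) (fun s _ hs => hjsrc.2 s hs) x
          have hv1 : st C1 u.val.1 (fun i => x (g i)) i = x (g i) :=
            st_stable (Nat.zero_le _) (fun s _ hs => hsrc s hs) _
          rw [hv2, hv1]
          have hiu : ∃ t, usedAt C1 t i := ⟨u.val.1, usedAt_of_chans u.prop hi⟩
          have hgi : g i = ↑(e (u0 i hiu) ⟨i, hu0s i hiu⟩) := dif_pos hiu
          have huu : u0 i hiu = u := Subtype.ext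
            (src_vertex_unique hg1 (u0 i hiu).prop u.prop (hu0s i hiu) hpm)
          rw [hgi, eCongr (u0 i hiu) u ⟨i, hu0s i hiu⟩ ⟨i, hpm⟩ huu rfl]
        · have hnm : i ∈ nonsrcChans C1 u.val := Finset.mem_filter.2 ⟨hi, hsrc⟩
          obtain ⟨w, b0, hw, he1, ho⟩ := nonsrc_edge u.prop hnm
          have he2 : Edge C2 b0 (f ⟨w, hw⟩).val (f u).val := (hf b0 ⟨w, hw⟩ u).1 he1
          refine ⟨outChan (f ⟨w, hw⟩).val.2 b0, ?_, ?_,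
            Or.inr ⟨⟨w, hw⟩, b0, he2, rfl, ho.symm⟩⟩
          · exact mem_chans.2 (by
              rcases he2.2.1 with h | h
              · exact Or.inl h
              · exact Or.inr h)
          · have hval2 : st C2 (f u).val.1 x (outChan (f ⟨w, hw⟩).val.2 b0)
                = outv C2 x (f ⟨w, hw⟩).val b0 := value_of_edge he2 x
            have hval1 : st C1 u.val.1 (fun i => x (g i)) (outChan w.2 b0)
                = outv C1 (fun i => x (g i)) w b0 := value_of_edge he1 _
            rw [hval2, ← ho, hval1]
            exact ih ⟨w, hw⟩ (by show w.1 < t; have := he1.1; omega) b0 x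
      have hne12 : u.val.2.1 ≠ u.val.2.2 :=
        (hg1 _ (layer_mem (memV_lt u.prop))).1 _ u.prop
      obtain ⟨m1, hm1c, hm1v, hm1tag⟩ := matchCh u.val.2.1 (mem_chans.2 (Or.inl rfl))
      obtain ⟨m2, hm2c, hm2v, hm2tag⟩ := matchCh u.val.2.2 (mem_chans.2 (Or.inr rfl))
      have hsrcedge : ∀ (p : {y // y ∈ srcChans C1 u.val}) (w : Vertex C1) (b0 : Bool),
          Edge C2 b0 (f w).val (f u).val → (↑(e u p) : Fin n) ≠ outChan (f w).val.2 b0 := by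
        intro p w b0 he hcontra
        have h1 : (↑(e u p) : Fin n) ∈ srcChans C2 (f u).val := (e u p).prop
        have h2 : outChan (f w).val.2 b0 ∈ nonsrcChans C2 (f u).val :=
          edge_target_nonsrc (f w).prop he
        rw [hcontra] at h1
        exact (Finset.mem_filter.1 h2).2 (Finset.mem_filter.1 h1).2
      have hmne : m1 ≠ m2 := by
        intro hmeq
        rcases hm1tag with ⟨p, hpi, hpe⟩ | ⟨w, b0, he, hj, hiw⟩ <;>
          rcases hm2tag with ⟨p', hpi', hpe'⟩ | ⟨w', b0', he', hj', hiw'⟩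
        · have hpp : (↑p : Fin n) = ↑p' :=
            eInj _ _ _ _ rfl (by rw [← hpe, ← hpe', hmeq])
          exact hne12 (by rw [← hpi, ← hpi', hpp])
        · exact hsrcedge p w' b0' he' (by rw [← hpe, ← hj', hmeq])
        · exact hsrcedge p' w b0 he (by rw [← hpe', ← hj, hmeq])
        · have hje : outChan (f w).val.2 b0 = outChan (f w').val.2 b0' := by
            rw [← hj, ← hj', hmeq]
          obtain ⟨hww, hbb⟩ := slot_unique hg2 (f w).prop (f w').prop
            (i := outChan (f w).val.2 b0) rfl hje.symm he.1 he'.1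
            (fun s hs hs' => he.2.2 s hs hs')
            (fun s hs hs' => by
              have := he'.2.2 s hs hs'
              rwa [← hje] at this)
          have hwwv : w = w' := f.injective (Subtype.ext hww)
          exact hne12 (by rw [hiw, hiw', hwwv, hbb])
      have hcase : (m1 = (f u).val.2.1 ∧ m2 = (f u).val.2.2) ∨
          (m1 = (f u).val.2.2 ∧ m2 = (f u).val.2.1) := by
        rcases mem_chans.1 hm1c with h1 | h1 <;> rcases mem_chans.1 hm2c with h2 | h2
        · exact absurd (h1.trans h2.symm) hmne
        · exact Or.inl ⟨h1, h2⟩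
        · exact Or.inr ⟨h1, h2⟩
        · exact absurd (h1.trans h2.symm) hmne
      cases b
      · rw [outv_false hg2 (f u).prop, outv_false hg1 u.prop]
        rcases hcase with ⟨h1, h2⟩ | ⟨h1, h2⟩
        · rw [← h1, ← h2, hm1v, hm2v]
        · rw [← h1, ← h2, hm1v, hm2v, Bool.and_comm]
      · rw [outv_true hg2 (f u).prop, outv_true hg1 u.prop]
        rcases hcase with ⟨h1, h2⟩ | ⟨h1, h2⟩
        · rw [← h1, ← h2, hm1v, hm2v]
        · rw [← h1, ← h2, hm1v, hm2v, Bool.or_comm]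
  -- the output-side channel map
  let h : Fin n → Fin n := fun j =>
    if hj : ∃ t, usedAt C2 t j then outChan (f.symm (w1 j hj)).val.2 (b1 j hj)
    else ↑(uσ ⟨j, Finset.mem_filter.2 ⟨Finset.mem_univ _, hj⟩⟩)
  have hfinal1 : ∀ (j : Fin n) (hj : ∃ t, usedAt C2 t j),
      ∀ s, (f.symm (w1 j hj)).val.1 < s →
        ¬ usedAt C1 s (outChan (f.symm (w1 j hj)).val.2 (b1 j hj)) := by
    intro j hj
    apply no_later_use_of_no_edge
    rintro ⟨v, hv, he⟩
    have he2 := (hf (b1 j hj) (f.symm (w1 j hj)) ⟨v, hv⟩).1 he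
    rw [Equiv.apply_symm_apply] at he2
    have huse : usedAt C2 (f ⟨v, hv⟩).val.1 j := by
      refine ⟨(f ⟨v, hv⟩).val.2, (f ⟨v, hv⟩).prop, ?_⟩
      have h21 := he2.2.1
      rw [hw1o j hj] at h21
      rcases h21 with h' | h'
      · exact Or.inl h'.symm
      · exact Or.inr h'.symm
    exact hw1g j hj _ he2.1 huse
  have hval : ∀ (x : Fin n → Bool) (j : Fin n),
      run C2 x j = run C1 (fun i => x (g i)) (h j) := by
    intro x j
    by_cases hj : ∃ t, usedAt C2 t j
    · have hh : h j = outChan (f.symm (w1 j hj)).val.2 (b1 j hj) := dif_pos hj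
      rw [hh]
      have h1 : run C2 x j = outv C2 x (w1 j hj).val (b1 j hj) := by
        have hfv := final_value (w1 j hj).prop
          (fun s hs => by rw [hw1o j hj]; exact hw1g j hj s hs) x
        rwa [hw1o j hj] at hfv
      have h2 : outv C2 x (w1 j hj).val (b1 j hj)
          = outv C1 (fun i => x (g i)) (f.symm (w1 j hj)).val (b1 j hj) := by
        have hm := main ((f.symm (w1 j hj)).val.1 + 1) (f.symm (w1 j hj))
          (by omega) (b1 j hj) x
        rwa [Equiv.apply_symm_apply] at hm
      have h3 : run C1 (fun i => x (g i)) (outChan (f.symm (w1 j hj)).val.2 (b1 j hj))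
          = outv C1 (fun i => x (g i)) (f.symm (w1 j hj)).val (b1 j hj) :=
        final_value (f.symm (w1 j hj)).prop (hfinal1 j hj) _
      rw [h1, h2, ← h3]
    · have hmem : j ∈ unusedF C2 := Finset.mem_filter.2 ⟨Finset.mem_univ _, hj⟩
      have hh : h j = ↑(uσ ⟨j, hmem⟩) := dif_neg hj
      rw [hh]
      have hi0' : ¬ ∃ t, usedAt C1 t ↑(uσ ⟨j, hmem⟩) :=
        (Finset.mem_filter.1 (uσ ⟨j, hmem⟩).prop).2
      rw [final_value_unused (fun s hu => hj ⟨s, hu⟩) x,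
        final_value_unused (fun s hu => hi0' ⟨s, hu⟩) _]
      have hg2' : g ↑(uσ ⟨j, hmem⟩) = ↑(uσ.symm ⟨↑(uσ ⟨j, hmem⟩),
          Finset.mem_filter.2 ⟨Finset.mem_univ _, hi0'⟩⟩) := dif_neg hi0'
      show x j = x (g ↑(uσ ⟨j, hmem⟩))
      rw [hg2']
      congr 1
      rw [show (⟨↑(uσ ⟨j, hmem⟩), Finset.mem_filter.2 ⟨Finset.mem_univ _, hi0'⟩⟩ :
          {y // y ∈ unusedF C1}) = uσ ⟨j, hmem⟩ from Subtype.ext rfl,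
        Equiv.symm_apply_apply]
  have hinj : Function.Injective h := by
    intro j j' heq
    by_cases hj : ∃ t, usedAt C2 t j <;> by_cases hj' : ∃ t, usedAt C2 t j'
    · have e1 : h j = outChan (f.symm (w1 j hj)).val.2 (b1 j hj) := dif_pos hj
      have e2 : h j' = outChan (f.symm (w1 j' hj')).val.2 (b1 j' hj') := dif_pos hj'
      rw [e1, e2] at heq
      obtain ⟨hww, hbb⟩ := slot_unique hg1 (f.symm (w1 j hj)).prop
        (f.symm (w1 j' hj')).prop
        (i := outChan (f.symm (w1 j hj)).val.2 (b1 j hj)) rfl heq.symm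
        (memV_lt (f.symm (w1 j hj)).prop) (memV_lt (f.symm (w1 j' hj')).prop)
        (fun s hs hs' => hfinal1 j hj s hs)
        (fun s hs hs' => by
          have := hfinal1 j' hj' s hs
          rwa [← heq] at this)
      have hwv : w1 j hj = w1 j' hj' := f.symm.injective (Subtype.ext hww)
      rw [← hw1o j hj, ← hw1o j' hj', hwv, hbb]
    · exfalso
      have e1 : h j = outChan (f.symm (w1 j hj)).val.2 (b1 j hj) := dif_pos hj
      have hmem' : j' ∈ unusedF C2 := Finset.mem_filter.2 ⟨Finset.mem_univ _, hj'⟩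
      have e2 : h j' = ↑(uσ ⟨j', hmem'⟩) := dif_neg hj'
      have hused : ∃ t, usedAt C1 t (h j) := by
        rw [e1]
        exact ⟨(f.symm (w1 j hj)).val.1, usedAt_of_memV (f.symm (w1 j hj)).prop _⟩
      rw [heq, e2] at hused
      exact (Finset.mem_filter.1 (uσ ⟨j', hmem'⟩).prop).2 hused
    · exfalso
      have e1 : h j' = outChan (f.symm (w1 j' hj')).val.2 (b1 j' hj') := dif_pos hj'
      have hmem' : j ∈ unusedF C2 := Finset.mem_filter.2 ⟨Finset.mem_univ _, hj⟩
      have e2 : h j = ↑(uσ ⟨j, hmem'⟩) := dif_neg hj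
      have hused : ∃ t, usedAt C1 t (h j') := by
        rw [e1]
        exact ⟨(f.symm (w1 j' hj')).val.1, usedAt_of_memV (f.symm (w1 j' hj')).prop _⟩
      rw [← heq, e2] at hused
      exact (Finset.mem_filter.1 (uσ ⟨j, hmem'⟩).prop).2 hused
    · have hmemj : j ∈ unusedF C2 := Finset.mem_filter.2 ⟨Finset.mem_univ _, hj⟩
      have hmemj' : j' ∈ unusedF C2 := Finset.mem_filter.2 ⟨Finset.mem_univ _, hj'⟩
      have e1 : h j = ↑(uσ ⟨j, hmemj⟩) := dif_neg hj
      have e2 : h j' = ↑(uσ ⟨j', hmemj'⟩) := dif_neg hj'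
      rw [e1, e2] at heq
      have := uσ.injective (Subtype.ext heq)
      exact congrArg Subtype.val this
  have hbij : Function.Bijective h := Finite.injective_iff_bijective.1 hinj
  refine ⟨(Equiv.ofBijective h hbij).symm, g, fun x => ?_⟩
  funext j
  have hp : permVec (Equiv.ofBijective h hbij).symm (run C1 (x ∘ g)) j
      = run C1 (x ∘ g) (h j) := by
    rw [permVec, Equiv.symm_symm]
    rfl
  rw [hp]
  exact hval x j
/-- Choi & Moon: if `C1;D` is a sorting network, `C2` is a
comparator network of the same depth as `C1`, and `G(C1) ≈ G(C2)`, then there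
is `D'` of the same depth as `D` with `C2;D'` a sorting network. -/
theorem iso_prefix_replacement {n : ℕ} (C1 D C2 : Net n)
    (hC2 : IsNet C2) (hdepth : C1.length = C2.length)
    (hiso : GraphIso C1 C2) (hsort : IsSortingNet (C1 ++ D)) :
    ∃ D' : Net n, D'.length = D.length ∧ IsSortingNet (C2 ++ D') := by
  classical
  obtain ⟨hnet, hsorts⟩ := hsort
  have hC1 : IsNet C1 := fun L hL => hnet L (List.mem_append_left _ hL)
  have hD : IsNet D := fun L hL => hnet L (List.mem_append_right _ hL)
  obtain ⟨π, g, hpg⟩ := iso_outputs hC1 hC2 hiso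
  have hgenD : IsGenNet (permNet π D) := permNet_gen (fun L hL => (hD L hL).gen)
  obtain ⟨D', ρ, hD', hlenD', hsem⟩ :=
    untangle (permNet π D).length (permNet π D) rfl hgenD
  have hlen : D'.length = D.length := by
    rw [hlenD']; simp [permNet]
  have hnet' : IsNet (C2 ++ D') := by
    intro L hL
    rcases List.mem_append.1 hL with h | h
    · exact hC2 L h
    · exact hD' L h
  refine ⟨D', hlen, hnet', ?_⟩
  have hkey : ∀ x, run (C2 ++ D') x = permVec (ρ * π) (run (C1 ++ D) (x ∘ g)) := by
    intro x
    rw [run_append, run_append, hpg x, hsem,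
      run_permNet π (fun L hL => (hD L hL).gen), permVec_mul]
  set S : Set (Fin n → Bool) := {y | BSorted y} with hS
  have hsub1 : S ⊆ Set.range (run (C2 ++ D')) :=
    fun y hy => ⟨y, run_sorted hnet' hy⟩
  have hsub2 : Set.range (run (C2 ++ D')) ⊆ permVec (ρ * π) '' S := by
    rintro z ⟨x, rfl⟩
    exact ⟨run (C1 ++ D) (x ∘ g), hsorts (x ∘ g), (hkey x).symm⟩
  have hcard1 : (Set.range (run (C2 ++ D'))).ncard ≤ S.ncard := by
    calc (Set.range (run (C2 ++ D'))).ncard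
        ≤ (permVec (ρ * π) '' S).ncard := Set.ncard_le_ncard hsub2 (Set.toFinite _)
      _ = S.ncard := Set.ncard_image_of_injective _ (permVec_injective _)
  have hEq : S = Set.range (run (C2 ++ D')) :=
    Set.eq_of_subset_of_ncard_le hsub1 hcard1 (Set.toFinite _)
  intro x
  have hmem : run (C2 ++ D') x ∈ S := by rw [hEq]; exact ⟨x, rfl⟩
  exact hmem

end SN
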